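/- For α ∈ R let V_α = [[cosh α, sinh α, 0],[sinh α, cosh α, 0],[0,0,1]] and R = (1/√cosh 2α)·[[cosh α, sinh α, 0],[−sinh α, cosh α, 0],[0,0,√cosh 2α]]. Then R ∈ SO(3), and V_α·R = (1/√cosh 2α)·[[1, sinh 2α, 0],[0, cosh 2α, 0],[0,0,√cosh 2α]] (the left finite simple shear) while R·V_α = (1/√cosh 2α)·[[cosh 2α, sinh 2α, 0],[0,1,0],[0,0,√cosh 2α]] (the right finite simple shear). -/

import Mathlib

open Matrix

/-- The finite pure shear stretch `V_α`. -/
noncomputable def pureShearStretch (α : ℝ) : Matrix (Fin 3) (Fin 3) ℝ :=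
  !![Real.cosh α, Real.sinh α, 0; Real.sinh α, Real.cosh α, 0; 0, 0, 1]

/-- The rotation `R` appearing in the polar decompositions of finite simple shears. -/
noncomputable def shearRotation (α : ℝ) : Matrix (Fin 3) (Fin 3) ℝ :=
  (1 / Real.sqrt (Real.cosh (2 * α))) •
    !![Real.cosh α, Real.sinh α, 0;
       -Real.sinh α, Real.cosh α, 0;
       0, 0, Real.sqrt (Real.cosh (2 * α))]

set_option maxHeartbeats 1000000 in
/-- `R ∈ SO(3)`, `V_α·R` is the left finite simple shear and `R·V_α` is the right finite
simple shear deformation. -/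
theorem polar_decomposition_finite_simple_shear (α : ℝ) :
    shearRotation α * (shearRotation α)ᵀ = 1 ∧ (shearRotation α).det = 1 ∧
    pureShearStretch α * shearRotation α =
      (1 / Real.sqrt (Real.cosh (2 * α))) •
        !![1, Real.sinh (2 * α), 0;
           0, Real.cosh (2 * α), 0;
           0, 0, Real.sqrt (Real.cosh (2 * α))] ∧
    shearRotation α * pureShearStretch α =
      (1 / Real.sqrt (Real.cosh (2 * α))) •
        !![Real.cosh (2 * α), Real.sinh (2 * α), 0;
           0, 1, 0;
           0, 0, Real.sqrt (Real.cosh (2 * α))] := by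
  have hc : (0:ℝ) < Real.cosh (2*α) := Real.cosh_pos (2*α)
  have hcosh2 : Real.cosh (2*α) = Real.cosh α ^ 2 + Real.sinh α ^ 2 := by
    rw [two_mul, Real.cosh_add]; ring
  have hsinh2 : Real.sinh (2*α) = 2 * Real.sinh α * Real.cosh α := by
    rw [two_mul, Real.sinh_add]; ring
  unfold shearRotation pureShearStretch
  set s := Real.sqrt (Real.cosh (2*α)) with hsdef
  have hs : 0 < s := Real.sqrt_pos.mpr hc
  have hs2 : s * s = Real.cosh α ^ 2 + Real.sinh α ^ 2 := by
    rw [hsdef, Real.mul_self_sqrt hc.le, hcosh2]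
  rw [hcosh2, hsinh2]
  clear_value s
  have hne := hs.ne'
  have h1 : Real.cosh α ^ 2 - Real.sinh α ^ 2 = 1 := Real.cosh_sq_sub_sinh_sq α
  refine ⟨?_, ?_, ?_, ?_⟩
  · ext i j
    fin_cases i <;> fin_cases j <;>
      simp [Matrix.mul_apply, Fin.sum_univ_three, Matrix.one_apply, Matrix.vecHead,
        Matrix.vecTail, Matrix.transpose_apply] <;>
      (try field_simp) <;> nlinarith [hs2, h1]
  · simp only [Matrix.det_fin_three, Matrix.smul_apply, Matrix.cons_val', Matrix.cons_val_zero,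
      Matrix.cons_val_one, Matrix.head_cons, Matrix.empty_val', Matrix.cons_val_fin_one,
      Matrix.head_fin_const, smul_eq_mul, Matrix.of_apply, Matrix.cons_val_two, Matrix.tail_cons]
    field_simp
    nlinarith [hs2, h1]
  · ext i j
    fin_cases i <;> fin_cases j <;>
      simp [Matrix.mul_apply, Fin.sum_univ_three, Matrix.vecHead, Matrix.vecTail] <;>
      (try field_simp) <;> (first | nlinarith [hs2, h1] | (left; nlinarith [hs2, h1]))
  · ext i j
    fin_cases i <;> fin_cases j <;>
      simp [Matrix.mul_apply, Fin.sum_univ_three, Matrix.vecHead, Matrix.vecTail] <;>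
      (try field_simp) <;> (first | nlinarith [hs2, h1] | (left; nlinarith [hs2, h1]))
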